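/- arXiv:1311.4404 — 9 statements merged into one kernel-verified Lean document; each statement's English description precedes it below -/
import Mathlib

section
/- For all real numbers a, b, c, the inequality a⁴ + b⁴ + c⁴ ≥ 4abc − 1 holds. -/
theorem stmt_0 (a b c : ℝ) : a^4 + b^4 + c^4 ≥ 4*a*b*c - 1 := by
  nlinarith [sq_nonneg (a^2 - b^2), sq_nonneg (c^2 - 1), sq_nonneg (a*b - c), sq_nonneg (a*b + c), sq_nonneg (a - b), sq_nonneg (a + b)]
end

section
/- If a, b, c, d are positive real numbers with a + b + c + d = 4, then a/(a³ + 8) + b/(b³ + 8) + c/(c³ + 8) + d/(d³ + 8) ≤ 4/9. -/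
lemma aux (x : ℝ) (hx : 0 < x) : x / (x^3 + 8) ≤ (2*x + 1)/27 := by
  rw [div_le_div_iff₀ (by positivity) (by norm_num)]
  nlinarith [sq_nonneg (x - 1), sq_nonneg x, mul_pos hx hx, sq_nonneg (x*(x-1))]

theorem stmt_4 (a b c d : ℝ) (ha : 0 < a) (hb : 0 < b) (hc : 0 < c) (hd : 0 < d)
    (hsum : a + b + c + d = 4) :
    a / (a^3 + 8) + b / (b^3 + 8) + c / (c^3 + 8) + d / (d^3 + 8) ≤ 4 / 9 := by
  have := aux a ha; have := aux b hb; have := aux c hc; have := aux d hd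
  linarith
end

section
/- If a, b, c are positive real numbers with a² + b² + c² = 3, then 1/(a³ + 2) + 1/(b³ + 2) + 1/(c³ + 2) ≥ 1. -/
lemma key (x : ℝ) (hx : 0 < x) : 1 / (x^3 + 2) ≥ (3 - x^2) / 6 := by
  have h2 : 0 < x^3 + 2 := by positivity
  rw [ge_iff_le, div_le_div_iff₀ (by norm_num) h2]
  nlinarith [mul_nonneg (mul_nonneg (sq_nonneg x) (sq_nonneg (x - 1)))
    (by linarith : (0:ℝ) ≤ x + 2)]

theorem stmt_6 (a b c : ℝ) (ha : 0 < a) (hb : 0 < b) (hc : 0 < c)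
    (hsum : a^2 + b^2 + c^2 = 3) :
    1 / (a^3 + 2) + 1 / (b^3 + 2) + 1 / (c^3 + 2) ≥ 1 := by
  have h1 := key a ha
  have h2 := key b hb
  have h3 := key c hc
  linarith
end

section
/- If a, b, c are positive real numbers with a + b + c = 1, then 10(a³ + b³ + c³) − 9(a⁵ + b⁵ + c⁵) ≥ 1. -/
theorem stmt_10 (a b c : ℝ) (ha : 0 < a) (hb : 0 < b) (hc : 0 < c)
    (hsum : a + b + c = 1) :
    10*(a^3 + b^3 + c^3) - 9*(a^5 + b^5 + c^5) ≥ 1 := by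
  have hc' : c = 1 - a - b := by linarith
  subst hc'
  nlinarith [mul_nonneg (mul_nonneg (mul_nonneg ha.le hb.le) (add_pos ha hb).le) (sq_nonneg (a-b)),
    mul_nonneg (mul_nonneg (mul_nonneg hb.le hc.le) (add_pos hb hc).le) (sq_nonneg (b-(1-a-b))),
    mul_nonneg (mul_nonneg (mul_nonneg ha.le hc.le) (add_pos ha hc).le) (sq_nonneg (a-(1-a-b))),
    mul_nonneg (mul_nonneg ha.le (mul_nonneg hb.le hb.le)) (sq_nonneg (a-(1-a-b))),
    mul_nonneg (mul_nonneg hb.le (mul_nonneg hc.le hc.le)) (sq_nonneg (b-a)),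
    mul_nonneg (mul_nonneg hc.le (mul_nonneg ha.le ha.le)) (sq_nonneg ((1-a-b)-b)),
    mul_nonneg (mul_nonneg (mul_nonneg ha.le ha.le) hb.le) (sq_nonneg (b-(1-a-b))),
    mul_nonneg (mul_nonneg (mul_nonneg hb.le hb.le) hc.le) (sq_nonneg ((1-a-b)-a)),
    mul_nonneg (mul_nonneg (mul_nonneg hc.le hc.le) ha.le) (sq_nonneg (a-b))]
end

section
/- For every real number x with 0 < x < 0.9, the inequality 10x³ − 9x⁵ ≥ (25/9)x − 16/27 holds. -/
theorem stmt_11 (x : ℝ) (hx : 0 < x) (hx' : x < 0.9) :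
    10*x^3 - 9*x^5 ≥ (25/9)*x - 16/27 := by
  have h : (0:ℝ) ≤ -9*x^3 - 6*x^2 + 7*x + 16/3 := by
    nlinarith [sq_nonneg (x - 1/3), mul_pos hx hx, sq_nonneg (x - 9/10), mul_nonneg hx.le (sq_nonneg (x - 1/3))]
  nlinarith [mul_nonneg (sq_nonneg (x - 1/3)) h]
end

section
/- If a, b, c are positive real numbers with a² + b² + c² = 12, then a·(b² + c²)^(1/3) + b·(c² + a²)^(1/3) + c·(a² + b²)^(1/3) ≤ 12, with equality when a = b = c = 2; hence the maximum of this expression under the constraint is 12. -/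
lemma cube_root_le (t : ℝ) (ht : 0 ≤ t) : t ^ ((1:ℝ)/3) ≤ (t + 16) / 12 := by
  have h12 : (0:ℝ) ≤ (t + 16) / 12 := by positivity
  have h : (t + 16) / 12 = (((t + 16) / 12) ^ (3:ℕ)) ^ ((1:ℝ)/3) := by
    rw [← Real.rpow_natCast _ 3, ← Real.rpow_mul h12]
    norm_num
  rw [h]
  apply Real.rpow_le_rpow ht _ (by norm_num)
  nlinarith [sq_nonneg (t - 8), sq_nonneg t, ht]

lemma main_ineq (a b c : ℝ) (ha : 0 < a) (hb : 0 < b) (hc : 0 < c)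
    (h : a^2 + b^2 + c^2 = 12) :
    a * (b^2 + c^2) ^ ((1:ℝ)/3) + b * (c^2 + a^2) ^ ((1:ℝ)/3) +
      c * (a^2 + b^2) ^ ((1:ℝ)/3) ≤ 12 := by
  have h1 := cube_root_le (b^2 + c^2) (by positivity)
  have h2 := cube_root_le (c^2 + a^2) (by positivity)
  have h3 := cube_root_le (a^2 + b^2) (by positivity)
  have e1 : a * (b^2 + c^2) ^ ((1:ℝ)/3) ≤ a * ((b^2 + c^2 + 16) / 12) :=
    mul_le_mul_of_nonneg_left h1 ha.le
  have e2 : b * (c^2 + a^2) ^ ((1:ℝ)/3) ≤ b * ((c^2 + a^2 + 16) / 12) :=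
    mul_le_mul_of_nonneg_left h2 hb.le
  have e3 : c * (a^2 + b^2) ^ ((1:ℝ)/3) ≤ c * ((a^2 + b^2 + 16) / 12) :=
    mul_le_mul_of_nonneg_left h3 hc.le
  nlinarith [mul_nonneg (sq_nonneg (a - 2)) ha.le, mul_nonneg (sq_nonneg (b - 2)) hb.le,
    mul_nonneg (sq_nonneg (c - 2)) hc.le, sq_nonneg (a - 2), sq_nonneg (b - 2), sq_nonneg (c - 2)]

lemma eight_rpow : ((8:ℝ)) ^ ((1:ℝ)/3) = 2 := by
  have : (8:ℝ) = 2 ^ (3:ℕ) := by norm_num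
  rw [this, ← Real.rpow_natCast 2 3, ← Real.rpow_mul (by norm_num)]
  norm_num

theorem stmt_13 :
    (∀ a b c : ℝ, 0 < a → 0 < b → 0 < c → a^2 + b^2 + c^2 = 12 →
      a * (b^2 + c^2) ^ ((1:ℝ)/3) + b * (c^2 + a^2) ^ ((1:ℝ)/3) +
        c * (a^2 + b^2) ^ ((1:ℝ)/3) ≤ 12) ∧
    ((2:ℝ) * (2^2 + 2^2 : ℝ) ^ ((1:ℝ)/3) + 2 * (2^2 + 2^2 : ℝ) ^ ((1:ℝ)/3) +
        2 * (2^2 + 2^2 : ℝ) ^ ((1:ℝ)/3) = 12) ∧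
    IsGreatest {A : ℝ | ∃ a b c : ℝ, 0 < a ∧ 0 < b ∧ 0 < c ∧ a^2 + b^2 + c^2 = 12 ∧
      A = a * (b^2 + c^2) ^ ((1:ℝ)/3) + b * (c^2 + a^2) ^ ((1:ℝ)/3) +
        c * (a^2 + b^2) ^ ((1:ℝ)/3)} 12 := by
  have heq : (2:ℝ) * (2^2 + 2^2 : ℝ) ^ ((1:ℝ)/3) + 2 * (2^2 + 2^2 : ℝ) ^ ((1:ℝ)/3) +
      2 * (2^2 + 2^2 : ℝ) ^ ((1:ℝ)/3) = 12 := by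
    norm_num [eight_rpow]
  refine ⟨main_ineq, heq, ⟨⟨2, 2, 2, by norm_num, by norm_num, by norm_num, by norm_num, ?_⟩, ?_⟩⟩
  · linarith [heq]
  · rintro A ⟨a, b, c, ha, hb, hc, h, rfl⟩
    exact main_ineq a b c ha hb hc h
end

section
/- For every positive integer n and all nonnegative real numbers x₁, …, xₙ with x₁ + ⋯ + xₙ = 1, the inequality Σ_{k=1}^{n} x_k(1 − x_k)² ≤ (1 − 1/n)² holds. -/
theorem stmt_14 (n : ℕ) (hn : 0 < n) (x : Fin n → ℝ) (hx : ∀ k, 0 ≤ x k)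
    (hsum : ∑ k, x k = 1) :
    ∑ k, x k * (1 - x k)^2 ≤ (1 - 1/(n:ℝ))^2 := by
  have hxle : ∀ k, x k ≤ 1 := by
    intro k
    rw [← hsum]
    exact Finset.single_le_sum (fun i _ => hx i) (Finset.mem_univ k)
  rcases eq_or_lt_of_le (Nat.one_le_of_lt hn) with h1 | h2
  · -- n = 1
    have hn1 : n = 1 := h1.symm
    subst hn1
    have h0 : x 0 = 1 := by simpa using hsum
    simp [h0]
  · -- n ≥ 2
    have hn2 : (2:ℝ) ≤ (n:ℝ) := by exact_mod_cast h2
    have hnpos : (0:ℝ) < (n:ℝ) := by positivity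
    set u : ℝ := 1/(n:ℝ) with hu
    have hupos : 0 < u := by positivity
    have huhalf : u ≤ 1/2 := by
      rw [hu, div_le_div_iff₀ (by positivity) (by norm_num)]; linarith
    set c : ℝ := 1 - 4*u + 3*u^2 with hc
    have key : ∀ k ∈ Finset.univ, x k * (1 - x k)^2 ≤
        u*(1-u)^2 + c*(x k - u) := by
      intro k _
      have h1 : (0:ℝ) ≤ (x k - u)^2 * ((2 - 2*u) - x k) := by
        apply mul_nonneg (sq_nonneg _)
        linarith [hxle k]
      nlinarith [h1]
    calc ∑ k, x k * (1 - x k)^2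
        ≤ ∑ k, (u*(1-u)^2 + c*(x k - u)) := Finset.sum_le_sum key
      _ = (1 - 1/(n:ℝ))^2 := by
          rw [Finset.sum_add_distrib, Finset.sum_const, ← Finset.mul_sum,
            Finset.sum_sub_distrib, hsum, Finset.sum_const]
          simp only [Finset.card_univ, Fintype.card_fin, nsmul_eq_mul, smul_eq_mul]
          have hne : (n:ℝ) ≠ 0 := ne_of_gt hnpos
          rw [hu, hc]
          field_simp
          ring
end

section
/- Let α be a nonzero real number, x₀ a positive real number, and n ≥ 2 a natural number. Let f be a function defined on the positive reals and differentiable at x₀. Suppose (α − 1)·f'(x₀) ≤ 0 and for every positive real x with x^α < n·x₀^α one has f(x) ≥ f(x₀) + f'(x₀)(x − x₀). Then for all positive reals x₁, …, xₙ with x₁^α + ⋯ + xₙ^α = n·x₀^α, one has f(x₁) + ⋯ + f(xₙ) ≥ n·f(x₀). -/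
open Real Finset

private lemma bern_neg {p t : ℝ} (hp : p < 0) (ht : 0 < t) :
    1 + p * (t - 1) ≤ t ^ p := by
  rw [Real.rpow_def_of_pos ht]
  have h1 : Real.log t * p + 1 ≤ Real.exp (Real.log t * p) := Real.add_one_le_exp _
  have h2 : Real.log t ≤ t - 1 := Real.log_le_sub_one_of_pos ht
  nlinarith

theorem stmt_15 (α : ℝ) (hα : α ≠ 0) (x₀ : ℝ) (hx₀ : 0 < x₀) (n : ℕ) (hn : 2 ≤ n)
    (f : ℝ → ℝ) (f' : ℝ) (hf : HasDerivAt f f' x₀)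
    (hsign : (α - 1) * f' ≤ 0)
    (htangent : ∀ x : ℝ, 0 < x → x ^ α < n * x₀ ^ α → f x ≥ f x₀ + f' * (x - x₀))
    (x : Fin n → ℝ) (hx : ∀ j, 0 < x j)
    (hconstraint : ∑ j, x j ^ α = n * x₀ ^ α) :
    ∑ j, f (x j) ≥ n * f x₀ := by
  have hne : n ≠ 0 := by omega
  -- each term is strictly less than the total
  have hlt : ∀ j, x j ^ α < n * x₀ ^ α := by
    intro j
    rw [← hconstraint]
    haveI : Nontrivial (Fin n) := Fin.nontrivial_iff_two_le.mpr hn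
    obtain ⟨k, hk⟩ : ∃ k : Fin n, k ≠ j := exists_ne j
    exact Finset.single_lt_sum hk (Finset.mem_univ j) (Finset.mem_univ k)
      (Real.rpow_pos_of_pos (hx k) α)
      (fun m _ _ => (Real.rpow_pos_of_pos (hx m) α).le)
  have htan : ∀ j, f x₀ + f' * (x j - x₀) ≤ f (x j) :=
    fun j => htangent _ (hx j) (hlt j)
  have hsum1 : ∑ j : Fin n, (f x₀ + f' * (x j - x₀)) ≤ ∑ j, f (x j) :=
    Finset.sum_le_sum fun j _ => htan j
  have hL1 : ∑ j : Fin n, (f x₀ + f' * (x j - x₀))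
      = n * f x₀ + f' * ((∑ j, x j) - n * x₀) := by
    rw [Finset.sum_add_distrib, Finset.sum_const, Finset.card_univ, Fintype.card_fin,
      ← Finset.mul_sum, Finset.sum_sub_distrib, Finset.sum_const, Finset.card_univ,
      Fintype.card_fin]
    simp [nsmul_eq_mul]
  -- the ratio constraint
  have hx0a : (0:ℝ) < x₀ ^ α := Real.rpow_pos_of_pos hx₀ α
  set S := ∑ j, x j with hS
  have hta : ∑ j, (x j / x₀) ^ α = n := by
    have h1 : ∀ j : Fin n, (x j / x₀) ^ α = x j ^ α / x₀ ^ α :=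
      fun j => Real.div_rpow (hx j).le hx₀.le α
    calc ∑ j, (x j / x₀) ^ α = (∑ j, x j ^ α) / x₀ ^ α := by
          rw [Finset.sum_div]; exact Finset.sum_congr rfl fun j _ => h1 j
      _ = (n : ℝ) := by rw [hconstraint]; field_simp
  have hL2 : ∑ j : Fin n, (1 + α * (x j / x₀ - 1)) = n + α * (S / x₀ - n) := by
    rw [Finset.sum_add_distrib, Finset.sum_const, Finset.card_univ, Fintype.card_fin,
      ← Finset.mul_sum, Finset.sum_sub_distrib, ← Finset.sum_div, Finset.sum_const,
      Finset.card_univ, Fintype.card_fin]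
    simp [nsmul_eq_mul, hS]
  -- key: f' * (S - n * x₀) ≥ 0
  have hkey : 0 ≤ f' * (S - n * x₀) := by
    rcases lt_trichotomy α 1 with h1 | h1 | h1
    · -- α < 1 : f' ≥ 0 and S ≥ n x₀
      have hf' : 0 ≤ f' := by nlinarith
      have hSge : (n : ℝ) * x₀ ≤ S := by
        rcases lt_or_gt_of_ne hα with hneg | hpos
        · -- α < 0 : t^α ≥ 1 + α(t-1)
          have hb : ∑ j : Fin n, (1 + α * (x j / x₀ - 1)) ≤ ∑ j, (x j / x₀) ^ α :=
            Finset.sum_le_sum fun j _ => bern_neg hneg (div_pos (hx j) hx₀)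
          rw [hta, hL2] at hb
          have hdiv : (n : ℝ) ≤ S / x₀ := by nlinarith
          calc (n : ℝ) * x₀ ≤ S / x₀ * x₀ := by nlinarith
            _ = S := by field_simp
        · -- 0 < α < 1 : t^α ≤ 1 + α(t-1)
          have hb : ∑ j, (x j / x₀) ^ α ≤ ∑ j : Fin n, (1 + α * (x j / x₀ - 1)) := by
            refine Finset.sum_le_sum fun j _ => ?_
            have ht : (0:ℝ) < x j / x₀ := div_pos (hx j) hx₀
            have := rpow_one_add_le_one_add_mul_self
              (s := x j / x₀ - 1) (by linarith) hpos.le h1.le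
            have e : 1 + (x j / x₀ - 1) = x j / x₀ := by ring
            rwa [e] at this
          rw [hta, hL2] at hb
          have hdiv : (n : ℝ) ≤ S / x₀ := by nlinarith
          calc (n : ℝ) * x₀ ≤ S / x₀ * x₀ := by nlinarith
            _ = S := by field_simp
      nlinarith
    · -- α = 1 : S = n x₀
      have : S = n * x₀ := by
        have : ∑ j, x j ^ α = S := by
          rw [h1]; exact Finset.sum_congr rfl fun j _ => Real.rpow_one _
        rw [this, h1, Real.rpow_one] at hconstraint
        linarith [hconstraint]
      rw [this]; simp
    · -- α > 1 : f' ≤ 0 and S ≤ n x₀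
      have hf' : f' ≤ 0 := by nlinarith
      have hb : ∑ j : Fin n, (1 + α * (x j / x₀ - 1)) ≤ ∑ j, (x j / x₀) ^ α := by
        refine Finset.sum_le_sum fun j _ => ?_
        have ht : (0:ℝ) < x j / x₀ := div_pos (hx j) hx₀
        have := one_add_mul_self_le_rpow_one_add
          (s := x j / x₀ - 1) (by linarith) h1.le
        have e : 1 + (x j / x₀ - 1) = x j / x₀ := by ring
        rwa [e] at this
      rw [hta, hL2] at hb
      have hdiv : S / x₀ ≤ (n : ℝ) := by nlinarith
      have hSle : S ≤ (n : ℝ) * x₀ := by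
        calc S = S / x₀ * x₀ := by field_simp
          _ ≤ (n : ℝ) * x₀ := by nlinarith
      nlinarith
  calc (n:ℝ) * f x₀ ≤ n * f x₀ + f' * (S - n * x₀) := by linarith
    _ = ∑ j : Fin n, (f x₀ + f' * (x j - x₀)) := hL1.symm
    _ ≤ ∑ j, f (x j) := hsum1
end

section
/- Let P(x) = ax³ + bx² + cx + d be a cubic polynomial with real coefficients and a ≠ 0, let n be a positive natural number, and let x₀ be a positive real number. If 2a·x₀ + b ≥ 0 and (n + 2)·a·x₀ + b ≥ 0, then for all nonnegative real numbers x₁, …, xₙ with x₁ + ⋯ + xₙ = n·x₀, one has P(x₁) + ⋯ + P(xₙ) ≥ n·P(x₀). -/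
theorem stmt_18 (a b c d : ℝ) (ha : a ≠ 0) (n : ℕ) (hn : 0 < n) (x₀ : ℝ) (hx₀ : 0 < x₀)
    (h1 : 2*a*x₀ + b ≥ 0) (h2 : (n + 2)*a*x₀ + b ≥ 0)
    (x : Fin n → ℝ) (hx : ∀ j, 0 ≤ x j) (hsum : ∑ j, x j = n * x₀) :
    ∑ j, (a*(x j)^3 + b*(x j)^2 + c*(x j) + d) ≥ n * (a*x₀^3 + b*x₀^2 + c*x₀ + d) := by
  set m := 3*a*x₀^2 + 2*b*x₀ + c with hm
  have hub : ∀ j, x j ≤ n * x₀ := by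
    intro j
    rw [← hsum]
    exact Finset.single_le_sum (fun i _ => hx i) (Finset.mem_univ j)
  have hfac : ∀ j, 0 ≤ a * x j + 2*a*x₀ + b := by
    intro j
    rcases le_or_gt 0 a with hA | hA
    · nlinarith [hx j]
    · nlinarith [hub j, hx j]
  have expand : ∑ j, (a*(x j)^3 + b*(x j)^2 + c*(x j) + d)
      = ∑ j, ((a*x₀^3 + b*x₀^2 + c*x₀ + d) + m*(x j - x₀)
          + (x j - x₀)^2 * (a * x j + 2*a*x₀ + b)) :=
    Finset.sum_congr rfl (fun j _ => by ring)
  have hnn : 0 ≤ ∑ j, (x j - x₀)^2 * (a * x j + 2*a*x₀ + b) :=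
    Finset.sum_nonneg (fun j _ => mul_nonneg (sq_nonneg _) (hfac j))
  have hlin : ∑ j, m*(x j - x₀) = 0 := by
    rw [← Finset.mul_sum, Finset.sum_sub_distrib, hsum, Finset.sum_const,
      Finset.card_univ, Fintype.card_fin, nsmul_eq_mul]
    ring
  rw [expand, Finset.sum_add_distrib, Finset.sum_add_distrib, hlin, Finset.sum_const,
    Finset.card_univ, Fintype.card_fin, nsmul_eq_mul]
  linarith
end
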